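/- With 𝒞 = {C ∈ K(2^ℕ × 2^ℕ) : π(C) = 2^ℕ}, h : 2^ℕ → 𝒞 a homeomorphism, σ(t) = min(h(t) ∩ π⁻¹({t})) (lexicographic minimum), M = σ(2^ℕ), and T(C) = {t ∈ 2^ℕ : h(t) ⊆ C} for C ∈ 𝒞: (a) T(C) is compact; (b) T(C) ⊆ π(M ∩ C); and (c) if C' ⊆ C both belong to 𝒞, then T(C') ⊆ T(C). -/

import Mathlib

open TopologicalSpace

abbrev Cantor : Type := ℕ → Bool

noncomputable instance : MetricSpace Cantor :=
  TopologicalSpace.metrizableSpaceMetric Cantor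

/-- The lexicographic order on `2^ℕ` (with `false < true`). -/
def cantorLe (x y : Cantor) : Prop :=
  x = y ∨ ∃ n, (∀ m, m < n → x m = y m) ∧ x n < y n

/-- `𝒞 = {C ∈ K(2^ℕ × 2^ℕ) : π(C) = 2^ℕ}`. -/
def Cc : Set (NonemptyCompacts (Cantor × Cantor)) :=
  {C | Prod.fst '' (C : Set (Cantor × Cantor)) = Set.univ}

lemma isClosed_subsets (C : Set (Cantor × Cantor)) (hC : IsClosed C) :
    IsClosed {F : NonemptyCompacts (Cantor × Cantor) | (F : Set (Cantor × Cantor)) ⊆ C} := by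
  rw [isClosed_iff_clusterPt]
  intro F hF x hx
  rw [EMetric.mem_iff_infEdist_zero_of_closed hC]
  refine le_antisymm (ENNReal.le_of_forall_pos_le_add fun ε hε _ => ?_) zero_le
  rw [zero_add]
  have hε' : (0 : ENNReal) < ε := ENNReal.coe_pos.2 hε
  rcases EMetric.mem_closure_iff.1 (mem_closure_iff_clusterPt.2 hF) ε hε' with ⟨G, hG, hdist⟩
  calc EMetric.infEdist x C ≤ EMetric.infEdist x (G : Set (Cantor × Cantor)) :=
        EMetric.infEdist_anti hG
    _ ≤ EMetric.infEdist x (F : Set (Cantor × Cantor)) +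
          EMetric.hausdorffEdist (F : Set (Cantor × Cantor)) G :=
        EMetric.infEdist_le_infEdist_add_hausdorffEdist
    _ = EMetric.hausdorffEdist (F : Set (Cantor × Cantor)) G := by
        rw [show EMetric.infEdist x (F : Set (Cantor × Cantor)) = 0 from EMetric.infEdist_zero_of_mem hx, zero_add]
    _ ≤ ε := hdist.le

/-- With `h : 2^ℕ → 𝒞` a homeomorphism, `σ(t) = min(h(t) ∩ π⁻¹({t}))`
(lexicographic minimum), `M = σ(2^ℕ)` and `T(C) = {t : h(t) ⊆ C}`:
(a) `T(C)` is compact; (b) `T(C) ⊆ π(M ∩ C)`; (c) `T` is monotone on `𝒞`. -/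
theorem stmt6 (h : Cantor ≃ₜ ↥Cc) (σ : Cantor → Cantor × Cantor)
    (hmem : ∀ t : Cantor,
      σ t ∈ ((h t).1 : Set (Cantor × Cantor)) ∩ Prod.fst ⁻¹' {t})
    (hmin : ∀ t : Cantor, ∀ x ∈ ((h t).1 : Set (Cantor × Cantor)) ∩ Prod.fst ⁻¹' {t},
      cantorLe (σ t).2 x.2)
    (M : Set (Cantor × Cantor)) (hM : M = Set.range σ)
    (T : ↥Cc → Set Cantor)
    (hT : ∀ C : ↥Cc, T C = {t | ((h t).1 : Set (Cantor × Cantor)) ⊆ (C.1 : Set (Cantor × Cantor))}) :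
    (∀ C : ↥Cc, IsCompact (T C)) ∧
    (∀ C : ↥Cc, T C ⊆ Prod.fst '' (M ∩ (C.1 : Set (Cantor × Cantor)))) ∧
    (∀ C C' : ↥Cc, (C'.1 : Set (Cantor × Cantor)) ⊆ (C.1 : Set (Cantor × Cantor)) →
      T C' ⊆ T C) := by
  refine ⟨fun C => ?_, fun C t ht => ?_, fun C C' hsub t ht => ?_⟩
  · have hclosed : IsClosed (T C) := by
      have : T C = h ⁻¹' (Subtype.val ⁻¹'
          {F : NonemptyCompacts (Cantor × Cantor) | (F : Set (Cantor × Cantor)) ⊆ C.1}) := by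
        rw [hT]; rfl
      rw [this]
      exact (isClosed_subsets _ C.1.isCompact.isClosed).preimage
        (continuous_subtype_val.comp h.continuous)
    exact hclosed.isCompact
  · rw [hT] at ht
    obtain ⟨hσ, hfst⟩ := hmem t
    exact ⟨σ t, ⟨hM ▸ Set.mem_range_self t, ht hσ⟩, hfst⟩
  · rw [hT] at ht ⊢
    exact ht.trans hsub
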